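/- Let J be a finite set, let g : 2^J → ℝ be a nonnegative monotone submodular set function with g(∅) = 0, let b ≥ 1 be an integer, let x : J → [0, 1/b] with Σ_{j∈J} x_j = 1, and let ℓ ≥ 1 be an integer. Let U = {J_1, …, J_ℓ} where J_1, …, J_ℓ are i.i.d. random elements of J with Pr[J_ι = j] = x_j. Then E[g(U)] ≥ (1 − exp(−1 + (1 − 1/b)^ℓ)) · g⁺(b·x), where g⁺ is the concave closure of g. -/
import Mathlib
set_option maxHeartbeats 1000000


/-- The concave closure `g⁺` of a set function `g` on a finite ground set:
`g⁺(y) = sup { Σ_S α_S g(S) : α a probability distribution on 2^J with marginals y }`. -/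
noncomputable def concaveClosure {J : Type*} [Fintype J] [DecidableEq J]
    (g : Finset J → ℝ) (y : J → ℝ) : ℝ :=
  sSup { v : ℝ | ∃ α : Finset J → ℝ, (∀ S, 0 ≤ α S) ∧ (∑ S : Finset J, α S = 1) ∧
    (∀ j, ∑ S ∈ Finset.univ.filter (fun S : Finset J => j ∈ S), α S = y j) ∧
    v = ∑ S : Finset J, α S * g S }

/-- Submodularity: the total of singleton marginals dominates the set marginal. -/
lemma submod_marg {J : Type*} [Fintype J] [DecidableEq J]
    (g : Finset J → ℝ)
    (hmono : ∀ S T : Finset J, S ⊆ T → g S ≤ g T)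
    (hsub : ∀ S T : Finset J, g (S ∪ T) + g (S ∩ T) ≤ g S + g T)
    (A S : Finset J) :
    g (A ∪ S) - g A ≤ ∑ j ∈ S, (g (insert j A) - g A) := by
  induction S using Finset.induction with
  | empty => simp
  | @insert j S hjS ih =>
    rw [Finset.sum_insert hjS]
    have h1 : A ∪ insert j S = (insert j A) ∪ (A ∪ S) := by
      ext a; simp only [Finset.mem_insert, Finset.mem_union]; tauto
    have h2 : A ⊆ (insert j A) ∩ (A ∪ S) := by
      intro a ha; simp [Finset.mem_inter, Finset.mem_insert, Finset.mem_union, ha]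
    have h3 := hsub (insert j A) (A ∪ S)
    have h4 := hmono _ _ h2
    rw [h1]
    linarith

/-- `univ.image (Fin.cons j t) = insert j (univ.image t)`. -/
lemma image_cons {J : Type*} [DecidableEq J] {n : ℕ} (j : J) (t : Fin n → J) :
    Finset.univ.image (Fin.cons j t : Fin (n + 1) → J)
      = insert j (Finset.univ.image t) := by
  ext a
  simp only [Finset.mem_image, Finset.mem_insert, Finset.mem_univ, true_and]
  constructor
  · rintro ⟨i, rfl⟩
    rcases Fin.eq_zero_or_eq_succ i with rfl | ⟨k, rfl⟩
    · left; simp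
    · right; exact ⟨k, by simp⟩
  · rintro (rfl | ⟨k, rfl⟩)
    · exact ⟨0, by simp⟩
    · exact ⟨k.succ, by simp⟩

def consE (J : Type*) (n : ℕ) : J × (Fin n → J) ≃ (Fin (n+1) → J) where
  toFun p := Fin.cons p.1 p.2
  invFun t := (t 0, Fin.tail t)
  left_inv := by rintro ⟨j,t⟩; simp
  right_inv := fun t => Fin.cons_self_tail t

lemma sum_fn_succ {J : Type*} [Fintype J] {n : ℕ} (f : (Fin (n+1) → J) → ℝ) :
    ∑ t : Fin (n+1) → J, f t = ∑ j : J, ∑ t : Fin n → J, f (Fin.cons j t) := by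
  rw [← Equiv.sum_comp (consE J n) f, Fintype.sum_prod_type]
  rfl

theorem stmt_14 {J : Type*} [Fintype J] [DecidableEq J]
    (g : Finset J → ℝ) (hnn : ∀ S, 0 ≤ g S) (h0 : g ∅ = 0)
    (hmono : ∀ S T : Finset J, S ⊆ T → g S ≤ g T)
    (hsub : ∀ S T : Finset J, g (S ∪ T) + g (S ∩ T) ≤ g S + g T)
    (b : ℕ) (hb : 1 ≤ b)
    (x : J → ℝ) (hx : ∀ j, 0 ≤ x j ∧ x j ≤ 1 / (b : ℝ)) (hsum : ∑ j, x j = 1)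
    (ℓ : ℕ) (hℓ : 1 ≤ ℓ) :
    -- E[g(U)] where U = {J_1,…,J_ℓ}, J_ι i.i.d. with Pr[J_ι = j] = x_j
    ∑ t : Fin ℓ → J, (∏ ι, x (t ι)) * g (Finset.univ.image t)
      ≥ (1 - Real.exp (-1 + (1 - 1 / (b : ℝ)) ^ ℓ)) *
          concaveClosure g (fun j => (b : ℝ) * x j) := by
  have hb0 : (0:ℝ) < (b:ℝ) := by exact_mod_cast Nat.pos_of_ne_zero (by omega)
  set r : ℝ := (1 - 1 / (b : ℝ)) ^ ℓ with hr
  have hbase0 : (0:ℝ) ≤ 1 - 1 / (b:ℝ) := by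
    have : 1 / (b:ℝ) ≤ 1 := by
      rw [div_le_one hb0]; exact_mod_cast hb
    linarith
  have hbase1 : 1 - 1 / (b:ℝ) < 1 := by
    have : 0 < 1 / (b:ℝ) := by positivity
    linarith
  have hr0 : 0 ≤ r := pow_nonneg hbase0 ℓ
  have hr1 : r < 1 := pow_lt_one₀ hbase0 hbase1 (by omega)
  set c : ℝ := 1 - Real.exp (-1 + r) with hc
  have hc0 : 0 < c := by
    have : Real.exp (-1 + r) < 1 := by
      rw [Real.exp_lt_one_iff]; linarith
    simp only [hc]; linarith
  have hcr : c ≤ 1 - r := by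
    have := Real.add_one_le_exp (r - 1)
    have h' : r ≤ Real.exp (-1 + r) := by
      have : r - 1 + 1 ≤ Real.exp (r - 1) := this
      simpa [neg_add_eq_sub, sub_add_cancel] using (by linarith [this] : r ≤ Real.exp (r - 1))
    simp only [hc]; linarith
  set LHS : ℝ := ∑ t : Fin ℓ → J, (∏ ι, x (t ι)) * g (Finset.univ.image t) with hLHS
  have hx0 : ∀ j, 0 ≤ x j := fun j => (hx j).1
  have hLHS0 : 0 ≤ LHS := by
    apply Finset.sum_nonneg
    intro t _
    exact mul_nonneg (Finset.prod_nonneg fun ι _ => hx0 _) (hnn _)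
  -- Main bound: for any feasible α, (1 - r) * OPT ≤ LHS
  have key : ∀ v ∈ { v : ℝ | ∃ α : Finset J → ℝ, (∀ S, 0 ≤ α S) ∧
      (∑ S : Finset J, α S = 1) ∧
      (∀ j, ∑ S ∈ Finset.univ.filter (fun S : Finset J => j ∈ S), α S = (b:ℝ) * x j) ∧
      v = ∑ S : Finset J, α S * g S }, (1 - r) * v ≤ LHS := by
    rintro v ⟨α, hα0, hα1, hαm, rfl⟩
    set OPT : ℝ := ∑ S : Finset J, α S * g S with hOPT
    have hOPT0 : 0 ≤ OPT :=
      Finset.sum_nonneg fun S _ => mul_nonneg (hα0 S) (hnn S)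
    -- pointwise step: for any A, (1/b)*OPT + (1-1/b)*g A ≤ ∑ j, x j * g (insert j A)
    have step : ∀ A : Finset J,
        (1 / (b:ℝ)) * OPT + (1 - 1 / (b:ℝ)) * g A ≤ ∑ j, x j * g (insert j A) := by
      intro A
      have hsplit : ∑ j, x j * g (insert j A)
          = g A + ∑ j, x j * (g (insert j A) - g A) := by
        have e : ∑ j, x j * (g (insert j A) - g A)
            = (∑ j, x j * g (insert j A)) - ∑ j, x j * g A := by
          rw [← Finset.sum_sub_distrib]
          exact Finset.sum_congr rfl fun j _ => by ring
        have e2 : ∑ j, x j * g A = g A := by rw [← Finset.sum_mul, hsum, one_mul]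
        rw [e, e2]; ring
      have hM : (OPT - g A) / (b:ℝ) ≤ ∑ j, x j * (g (insert j A) - g A) := by
        have hbM : OPT - g A ≤ (b:ℝ) * ∑ j, x j * (g (insert j A) - g A) := by
          have e1 : (b:ℝ) * ∑ j, x j * (g (insert j A) - g A)
              = ∑ j, ((b:ℝ) * x j) * (g (insert j A) - g A) := by
            rw [Finset.mul_sum]; exact Finset.sum_congr rfl fun j _ => by ring
          have e2 : ∑ j, ((b:ℝ) * x j) * (g (insert j A) - g A)
              = ∑ S : Finset J, α S * ∑ j ∈ S, (g (insert j A) - g A) := by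
            calc ∑ j, ((b:ℝ) * x j) * (g (insert j A) - g A)
                = ∑ j, (∑ S ∈ Finset.univ.filter (fun S : Finset J => j ∈ S), α S)
                    * (g (insert j A) - g A) := by
                  exact Finset.sum_congr rfl fun j _ => by rw [hαm j]
              _ = ∑ j, ∑ S ∈ Finset.univ.filter (fun S : Finset J => j ∈ S),
                    α S * (g (insert j A) - g A) := by
                  exact Finset.sum_congr rfl fun j _ => by rw [Finset.sum_mul]
              _ = ∑ j : J, ∑ S : Finset J,
                    if j ∈ S then α S * (g (insert j A) - g A) else 0 := by
                  exact Finset.sum_congr rfl fun j _ => (Finset.sum_filter _ _)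
              _ = ∑ S : Finset J, ∑ j : J,
                    if j ∈ S then α S * (g (insert j A) - g A) else 0 :=
                  Finset.sum_comm
              _ = ∑ S : Finset J, α S * ∑ j ∈ S, (g (insert j A) - g A) := by
                  refine Finset.sum_congr rfl fun S _ => ?_
                  rw [Finset.mul_sum, Finset.sum_ite_mem, Finset.univ_inter]
          rw [e1, e2]
          have hOPTe : OPT - g A = ∑ S : Finset J, α S * (g S - g A) := by
            rw [hOPT]
            rw [Finset.sum_congr rfl (fun (S : Finset J) _ =>
              (by ring : α S * (g S - g A) = α S * g S - α S * g A)),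
              Finset.sum_sub_distrib, ← Finset.sum_mul, hα1]
            ring
          rw [hOPTe]
          refine Finset.sum_le_sum fun S _ => ?_
          refine mul_le_mul_of_nonneg_left ?_ (hα0 S)
          have h1 : g S ≤ g (A ∪ S) := hmono _ _ Finset.subset_union_right
          have h2 := submod_marg g hmono hsub A S
          linarith
        rw [div_le_iff₀ hb0]
        linarith
      have : (1 / (b:ℝ)) * OPT + (1 - 1 / (b:ℝ)) * g A
          = g A + (OPT - g A) / (b:ℝ) := by field_simp; ring
      rw [this, hsplit]
      linarith
    -- induction over number of samples
    have main : ∀ k : ℕ,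
        (∑ t : Fin k → J, ∏ ι, x (t ι)) = 1 ∧
        (1 - (1 - 1 / (b:ℝ)) ^ k) * OPT
          ≤ ∑ t : Fin k → J, (∏ ι, x (t ι)) * g (Finset.univ.image t) := by
      intro k
      induction k with
      | zero =>
        constructor
        · simp
        · simp [h0]
      | succ n ih =>
        obtain ⟨ih1, ih2⟩ := ih
        constructor
        · rw [sum_fn_succ]
          simp only [Fin.prod_univ_succ, Fin.cons_zero, Fin.cons_succ]
          simp only [← Finset.mul_sum]
          rw [ih1]
          simpa using hsum
        · rw [sum_fn_succ]
          simp only [Fin.prod_univ_succ, Fin.cons_zero, Fin.cons_succ, image_cons]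
          rw [Finset.sum_comm]
          have e4 : ∑ t : Fin n → J, ∑ j : J,
              (x j * ∏ ι, x (t ι)) * g (insert j (Finset.univ.image t))
              = ∑ t : Fin n → J, (∏ ι, x (t ι)) *
                  ∑ j, x j * g (insert j (Finset.univ.image t)) := by
            refine Finset.sum_congr rfl fun t _ => ?_
            rw [Finset.mul_sum]
            exact Finset.sum_congr rfl fun j _ => by ring
          rw [e4]
          have hge : ∑ t : Fin n → J, (∏ ι, x (t ι)) *
                ((1/(b:ℝ))*OPT + (1-1/(b:ℝ))*g (Finset.univ.image t))
              ≤ ∑ t : Fin n → J, (∏ ι, x (t ι)) *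
                  ∑ j, x j * g (insert j (Finset.univ.image t)) :=
            Finset.sum_le_sum fun t _ => mul_le_mul_of_nonneg_left (step _)
              (Finset.prod_nonneg fun ι _ => hx0 _)
          refine le_trans ?_ hge
          have e5 : ∑ t : Fin n → J, (∏ ι, x (t ι)) *
                ((1/(b:ℝ))*OPT + (1-1/(b:ℝ))*g (Finset.univ.image t))
              = (1/(b:ℝ))*OPT * (∑ t : Fin n → J, ∏ ι, x (t ι))
                + (1-1/(b:ℝ)) *
                    ∑ t : Fin n → J, (∏ ι, x (t ι)) * g (Finset.univ.image t) := by
            have ha : ∀ t : Fin n → J, (∏ ι, x (t ι)) *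
                  ((1/(b:ℝ))*OPT + (1-1/(b:ℝ))*g (Finset.univ.image t))
                = (1/(b:ℝ))*OPT * (∏ ι, x (t ι))
                  + (1-1/(b:ℝ)) * ((∏ ι, x (t ι)) * g (Finset.univ.image t)) :=
              fun t => by ring
            rw [Finset.sum_congr rfl fun t _ => ha t, Finset.sum_add_distrib,
              ← Finset.mul_sum Finset.univ (fun t : Fin n → J => ∏ ι, x (t ι))
                ((1/(b:ℝ))*OPT),
              ← Finset.mul_sum Finset.univ
                (fun t : Fin n → J => (∏ ι, x (t ι)) * g (Finset.univ.image t))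
                (1-1/(b:ℝ))]
          rw [e5, ih1, mul_one]
          have h6 := mul_le_mul_of_nonneg_left ih2 hbase0
          have hpow : (1-1/(b:ℝ))^(n+1) = (1-1/(b:ℝ))*(1-1/(b:ℝ))^n := by ring
          rw [hpow]
          linarith
    have := (main ℓ).2
    nlinarith [this, hOPT0, hr1]
  -- conclude via sSup
  rw [ge_iff_le, concaveClosure]
  have hub : sSup { v : ℝ | ∃ α : Finset J → ℝ, (∀ S, 0 ≤ α S) ∧
      (∑ S : Finset J, α S = 1) ∧
      (∀ j, ∑ S ∈ Finset.univ.filter (fun S : Finset J => j ∈ S), α S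
        = (fun j => (b:ℝ) * x j) j) ∧
      v = ∑ S : Finset J, α S * g S } ≤ LHS / c := by
    apply Real.sSup_le
    · rintro v hv
      have hv' := key v hv
      have hv0 : 0 ≤ v := by
        obtain ⟨α, hα0, _, _, rfl⟩ := hv
        exact Finset.sum_nonneg fun S _ => mul_nonneg (hα0 S) (hnn S)
      rw [le_div_iff₀ hc0]
      calc v * c ≤ v * (1 - r) := mul_le_mul_of_nonneg_left hcr hv0
        _ = (1 - r) * v := by ring
        _ ≤ LHS := hv'
    · positivity
  calc c * sSup _ ≤ c * (LHS / c) := by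
        exact mul_le_mul_of_nonneg_left hub (le_of_lt hc0)
    _ = LHS := by field_simp
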